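/- With the setup of the linearisation (w solving w'' + p w' + q w = 0, W the Wronskian with a second solution w̃, z = w̃/w, g = w w'/W, d/dz = (w²/W) d/ds), one has g''' − 12 g g'' − 6 (g')² + 48 g² g' − 24 g⁴ = −(q'' + 2 p' q + 5 q' p + 6 p² q) w⁸ / W⁴. -/

import Mathlib

set_option maxHeartbeats 2000000 in
/-- with `g = w w'/W`, `z = w̃/w`, and `d/dz = (w²/W)·d/ds`,
one has `g''' − 12 g g'' − 6 (g')² + 48 g² g' − 24 g⁴
       = −(q'' + 2 p' q + 5 q' p + 6 p² q) w⁸/W⁴`. -/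
theorem abel_linearisation_third_invariant
    (I : Set ℝ) (hI : IsOpen I)
    (p p' q q' q'' w w' w'' wt wt' wt'' g dg g1 dg1 g2 dg2 : ℝ → ℝ)
    (hp : ∀ s ∈ I, HasDerivAt p (p' s) s)
    (hq : ∀ s ∈ I, HasDerivAt q (q' s) s)
    (hq' : ∀ s ∈ I, HasDerivAt q' (q'' s) s)
    (hw : ∀ s ∈ I, HasDerivAt w (w' s) s)
    (hw' : ∀ s ∈ I, HasDerivAt w' (w'' s) s)
    (hwt : ∀ s ∈ I, HasDerivAt wt (wt' s) s)
    (hwt' : ∀ s ∈ I, HasDerivAt wt' (wt'' s) s)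
    (hODEw : ∀ s ∈ I, w'' s + p s * w' s + q s * w s = 0)
    (hODEwt : ∀ s ∈ I, wt'' s + p s * wt' s + q s * wt s = 0)
    (hw0 : ∀ s ∈ I, w s ≠ 0)
    (hW0 : ∀ s ∈ I, wt' s * w s - w' s * wt s ≠ 0)
    (hg : ∀ s ∈ I, g s = w s * w' s / (wt' s * w s - w' s * wt s))
    (hdg : ∀ s ∈ I, HasDerivAt g (dg s) s)
    (hg1 : ∀ s ∈ I, g1 s = (w s) ^ 2 / (wt' s * w s - w' s * wt s) * dg s)
    (hdg1 : ∀ s ∈ I, HasDerivAt g1 (dg1 s) s)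
    (hg2 : ∀ s ∈ I, g2 s = (w s) ^ 2 / (wt' s * w s - w' s * wt s) * dg1 s)
    (hdg2 : ∀ s ∈ I, HasDerivAt g2 (dg2 s) s) :
    ∀ s ∈ I,
      (w s) ^ 2 / (wt' s * w s - w' s * wt s) * dg2 s
          - 12 * g s * g2 s - 6 * (g1 s) ^ 2
          + 48 * (g s) ^ 2 * g1 s - 24 * (g s) ^ 4
        = - (q'' s + 2 * p' s * q s + 5 * q' s * p s + 6 * (p s) ^ 2 * q s)
            * (w s) ^ 8 / (wt' s * w s - w' s * wt s) ^ 4 := by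
  intro s hs
  -- abbreviation lemmas
  have hw2 : ∀ t ∈ I, w'' t = -(p t * w' t) - q t * w t := by
    intro t ht; linarith [hODEw t ht]
  have hwt2 : ∀ t ∈ I, wt'' t = -(p t * wt' t) - q t * wt t := by
    intro t ht; linarith [hODEwt t ht]
  -- derivative of the Wronskian
  have hdW : ∀ t ∈ I, HasDerivAt (fun u => wt' u * w u - w' u * wt u)
      (-(p t) * (wt' t * w t - w' t * wt t)) t := by
    intro t ht
    have h := ((hwt' t ht).mul (hw t ht)).sub ((hw' t ht).mul (hwt t ht))
    convert h using 1
    iterate 3 rfl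
    rw [hw2 t ht, hwt2 t ht]; ring
  -- value of dg on I
  have hdgval : ∀ t ∈ I, dg t
      = ((w' t) ^ 2 - q t * (w t) ^ 2) / (wt' t * w t - w' t * wt t) := by
    intro t ht
    have hF : HasDerivAt (fun u => w u * w' u / (wt' u * w u - w' u * wt u))
        (((w' t) ^ 2 - q t * (w t) ^ 2) / (wt' t * w t - w' t * wt t)) t := by
      have h := ((hw t ht).mul (hw' t ht)).div (hdW t ht) (hW0 t ht)
      convert h using 1
      iterate 3 rfl
      rw [hw2 t ht, Pi.mul_apply, div_eq_div_iff (hW0 t ht) (pow_ne_zero 2 (hW0 t ht))]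
      ring
    have heq : g =ᶠ[nhds t] fun u => w u * w' u / (wt' u * w u - w' u * wt u) := by
      filter_upwards [hI.mem_nhds ht] with x hx using hg x hx
    exact (hdg t ht).unique (hF.congr_of_eventuallyEq heq)
  -- value of g1 on I
  have hg1val : ∀ t ∈ I, g1 t
      = (w t) ^ 2 * ((w' t) ^ 2 - q t * (w t) ^ 2)
        / (wt' t * w t - w' t * wt t) ^ 2 := by
    intro t ht
    rw [hg1 t ht, hdgval t ht]
    field_simp
  -- value of dg1 on I
  have hdg1val : ∀ t ∈ I, dg1 t
      = (2 * w t * (w' t) ^ 3 - 6 * q t * (w t) ^ 3 * w' t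
          - q' t * (w t) ^ 4 - 2 * p t * q t * (w t) ^ 4)
        / (wt' t * w t - w' t * wt t) ^ 2 := by
    intro t ht
    have hF : HasDerivAt (fun u => (w u) ^ 2 * ((w' u) ^ 2 - q u * (w u) ^ 2)
          / (wt' u * w u - w' u * wt u) ^ 2)
        ((2 * w t * (w' t) ^ 3 - 6 * q t * (w t) ^ 3 * w' t
          - q' t * (w t) ^ 4 - 2 * p t * q t * (w t) ^ 4)
        / (wt' t * w t - w' t * wt t) ^ 2) t := by
      have hN : HasDerivAt (fun u => (w u) ^ 2 * ((w' u) ^ 2 - q u * (w u) ^ 2))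
          ((2 * w t ^ 1 * w' t) * ((w' t) ^ 2 - q t * (w t) ^ 2)
            + (w t) ^ 2 * ((2 * w' t ^ 1 * w'' t)
              - (q' t * (w t) ^ 2 + q t * (2 * w t ^ 1 * w' t)))) t :=
        (((hw t ht).pow 2).mul (((hw' t ht).pow 2).sub
          ((hq t ht).mul ((hw t ht).pow 2))))
      have hD : HasDerivAt (fun u => (wt' u * w u - w' u * wt u) ^ 2)
          (2 * (wt' t * w t - w' t * wt t) ^ 1
            * (-(p t) * (wt' t * w t - w' t * wt t))) t :=
        (hdW t ht).pow 2
      have h := hN.div hD (pow_ne_zero 2 (hW0 t ht))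
      convert h using 1
      iterate 3 rfl
      rw [hw2 t ht, div_eq_div_iff (pow_ne_zero 2 (hW0 t ht))
        (pow_ne_zero 2 (pow_ne_zero 2 (hW0 t ht)))]
      ring
    have heq : g1 =ᶠ[nhds t] fun u => (w u) ^ 2 * ((w' u) ^ 2 - q u * (w u) ^ 2)
        / (wt' u * w u - w' u * wt u) ^ 2 := by
      filter_upwards [hI.mem_nhds ht] with x hx using hg1val x hx
    exact (hdg1 t ht).unique (hF.congr_of_eventuallyEq heq)
  -- value of g2 on I
  have hg2val : ∀ t ∈ I, g2 t
      = (2 * (w t) ^ 3 * (w' t) ^ 3 - 6 * q t * (w t) ^ 5 * w' t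
          - q' t * (w t) ^ 6 - 2 * p t * q t * (w t) ^ 6)
        / (wt' t * w t - w' t * wt t) ^ 3 := by
    intro t ht
    rw [hg2 t ht, hdg1val t ht]
    field_simp
  -- value of dg2 on I
  have hdg2val : ∀ t ∈ I, dg2 t
      = (6 * (w t) ^ 2 * (w' t) ^ 4 - 36 * q t * (w t) ^ 4 * (w' t) ^ 2
          - 12 * q' t * (w t) ^ 5 * w' t - 24 * p t * q t * (w t) ^ 5 * w' t
          + 6 * (q t) ^ 2 * (w t) ^ 6 - q'' t * (w t) ^ 6
          - 2 * p' t * q t * (w t) ^ 6 - 5 * p t * q' t * (w t) ^ 6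
          - 6 * (p t) ^ 2 * q t * (w t) ^ 6)
        / (wt' t * w t - w' t * wt t) ^ 3 := by
    intro t ht
    have hF : HasDerivAt (fun u => (2 * (w u) ^ 3 * (w' u) ^ 3
          - 6 * q u * (w u) ^ 5 * w' u - q' u * (w u) ^ 6
          - 2 * p u * q u * (w u) ^ 6) / (wt' u * w u - w' u * wt u) ^ 3)
        ((6 * (w t) ^ 2 * (w' t) ^ 4 - 36 * q t * (w t) ^ 4 * (w' t) ^ 2
          - 12 * q' t * (w t) ^ 5 * w' t - 24 * p t * q t * (w t) ^ 5 * w' t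
          + 6 * (q t) ^ 2 * (w t) ^ 6 - q'' t * (w t) ^ 6
          - 2 * p' t * q t * (w t) ^ 6 - 5 * p t * q' t * (w t) ^ 6
          - 6 * (p t) ^ 2 * q t * (w t) ^ 6)
        / (wt' t * w t - w' t * wt t) ^ 3) t := by
      have hN : HasDerivAt (fun u => 2 * (w u) ^ 3 * (w' u) ^ 3
            - 6 * q u * (w u) ^ 5 * w' u - q' u * (w u) ^ 6
            - 2 * p u * q u * (w u) ^ 6)
          ((0 * (w t) ^ 3 + 2 * (3 * w t ^ 2 * w' t)) * (w' t) ^ 3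
              + 2 * (w t) ^ 3 * (3 * w' t ^ 2 * w'' t)
            - (((0 * q t + 6 * q' t) * (w t) ^ 5
                + 6 * q t * (5 * w t ^ 4 * w' t)) * w' t
              + 6 * q t * (w t) ^ 5 * w'' t)
            - (q'' t * (w t) ^ 6 + q' t * (6 * w t ^ 5 * w' t))
            - (((0 * p t + 2 * p' t) * q t + 2 * p t * q' t) * (w t) ^ 6
              + 2 * p t * q t * (6 * w t ^ 5 * w' t))) t := by
        exact (((((hasDerivAt_const t (2:ℝ)).mul ((hw t ht).pow 3)).mul
            ((hw' t ht).pow 3)).sub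
          ((((hasDerivAt_const t (6:ℝ)).mul (hq t ht)).mul
            ((hw t ht).pow 5)).mul (hw' t ht))).sub
          ((hq' t ht).mul ((hw t ht).pow 6))).sub
          ((((hasDerivAt_const t (2:ℝ)).mul (hp t ht)).mul (hq t ht)).mul
            ((hw t ht).pow 6))
      have hD : HasDerivAt (fun u => (wt' u * w u - w' u * wt u) ^ 3)
          (3 * (wt' t * w t - w' t * wt t) ^ 2
            * (-(p t) * (wt' t * w t - w' t * wt t))) t :=
        (hdW t ht).pow 3
      have h := hN.div hD (pow_ne_zero 3 (hW0 t ht))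
      convert h using 1
      iterate 3 rfl
      rw [hw2 t ht, div_eq_div_iff (pow_ne_zero 3 (hW0 t ht))
        (pow_ne_zero 2 (pow_ne_zero 3 (hW0 t ht)))]
      ring
    have heq : g2 =ᶠ[nhds t] fun u => (2 * (w u) ^ 3 * (w' u) ^ 3
        - 6 * q u * (w u) ^ 5 * w' u - q' u * (w u) ^ 6
        - 2 * p u * q u * (w u) ^ 6) / (wt' u * w u - w' u * wt u) ^ 3 := by
      filter_upwards [hI.mem_nhds ht] with x hx using hg2val x hx
    exact (hdg2 t ht).unique (hF.congr_of_eventuallyEq heq)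
  -- conclusion
  rw [hg s hs, hg1val s hs, hg2val s hs, hdg2val s hs]
  have hW := hW0 s hs
  field_simp
  ring
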